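/- (Regularized representer norm identity.) Let H be the RKHS of a kernel K: X × X → ℝ, let φ = (φ_1,…,φ_N) be a vector of bounded linear functionals on H with Gram matrix K(φ,φ) ∈ ℝ^{N×N} given by K(φ,φ)_{ij} = φ_j(K_{φ_i}), and let ξ ∈ ℝ^N and λ > 0. Then the minimum over f ∈ H of the regularized functional ‖f‖²_H + (1/λ)‖φ(f) − ξ‖²₂, where φ(f) = (φ_1(f),…,φ_N(f)), equals ξᵀ (K(φ,φ) + λI)^{−1} ξ. -/

import Mathlib

open scoped RealInnerProductSpace
open Matrix

noncomputable section

/-- A symmetric positive-definite kernel. -/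
def IsPosDefKernel {α : Type*} (K : α → α → ℝ) : Prop :=
  (∀ x y, K x y = K y x) ∧
    ∀ (n : ℕ) (x : Fin n → α) (c : Fin n → ℝ),
      0 ≤ ∑ i, ∑ j, c i * c j * K (x i) (x j)

/-- **Regularized representer norm identity.**  Let `H` be the RKHS of a kernel
`K : X × X → ℝ`, let `φ = (φ_1, …, φ_N)` be bounded linear functionals on `H` with Riesz
representers `rep i` and Gram matrix `G_{ij} = φ_j(K_{φ_i})`, and let `ξ ∈ ℝ^N`,
`λ > 0`.  Then the minimum over `f ∈ H` of the regularized functional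
`‖f‖²_H + (1/λ) ‖φ(f) − ξ‖²₂` is attained and equals `ξᵀ (G + λ I)⁻¹ ξ`. -/
theorem regularized_representer_norm_identity
    {X H : Type} [NormedAddCommGroup H] [InnerProductSpace ℝ H]
    (K : X → X → ℝ) (hK : IsPosDefKernel K)
    (ev : H →ₗ[ℝ] X → ℝ) (sect : X → H)
    (repro : ∀ (f : H) (x : X), ⟪f, sect x⟫ = ev f x)
    (sect_eval : ∀ x y : X, ev (sect x) y = K x y)
    (N : ℕ) (φ : Fin N → H →L[ℝ] ℝ)
    (rep : Fin N → H) (hrep : ∀ (i : Fin N) (f : H), ⟪f, rep i⟫ = φ i f)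
    (G : Matrix (Fin N) (Fin N) ℝ)
    (hG : G = Matrix.of fun i j => φ j (rep i))
    (ξ : Fin N → ℝ) (lam : ℝ) (hlam : 0 < lam) :
    IsLeast (Set.range fun f : H => ‖f‖ ^ 2 + (1 / lam) * ∑ i, (φ i f - ξ i) ^ 2)
      (ξ ⬝ᵥ ((G + lam • (1 : Matrix (Fin N) (Fin N) ℝ))⁻¹ *ᵥ ξ)) := by
  have hGij : ∀ i j, G i j = ⟪rep i, rep j⟫ := by
    intro i j; rw [hG]; exact (hrep j (rep i)).symm
  have hGsymm : ∀ i j, G i j = G j i := by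
    intro i j; rw [hGij, hGij, real_inner_comm]
  -- quadratic form of G is a Gram form
  have hGq : ∀ x : Fin N → ℝ, x ⬝ᵥ (G *ᵥ x) = ‖∑ i, x i • rep i‖ ^ 2 := by
    intro x
    rw [← real_inner_self_eq_norm_sq]
    simp only [sum_inner, inner_sum, real_inner_smul_left, real_inner_smul_right,
      dotProduct, mulVec, Finset.mul_sum]
    exact Finset.sum_congr rfl fun i _ => Finset.sum_congr rfl fun j _ => by
      rw [hGij i j, real_inner_comm (rep i) (rep j)]; ring
  set A := G + lam • (1 : Matrix (Fin N) (Fin N) ℝ) with hA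
  have hApos : A.PosDef := by
    rw [Matrix.posDef_iff_dotProduct_mulVec]
    constructor
    · ext i j
      simp only [hA, Matrix.IsHermitian, conjTranspose_apply, Matrix.add_apply, star_trivial,
        Matrix.smul_apply, Matrix.one_apply, smul_eq_mul]
      rw [hGsymm]
      by_cases h : i = j <;> simp [h, eq_comm]
    · intro x hx
      have h1 : star x ⬝ᵥ (A *ᵥ x) = x ⬝ᵥ (G *ᵥ x) + lam * (x ⬝ᵥ x) := by
        simp [hA, Matrix.add_mulVec, Matrix.smul_mulVec, Matrix.one_mulVec,
          dotProduct_add, dotProduct_smul, smul_eq_mul]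
      rw [h1]
      have h2 : 0 ≤ x ⬝ᵥ (G *ᵥ x) := by rw [hGq]; positivity
      have h3 : 0 < x ⬝ᵥ x := by
        have : x ⬝ᵥ x = ∑ i, x i ^ 2 := by simp [dotProduct, sq]
        rw [this]
        rcases Function.ne_iff.1 hx with ⟨i, hi⟩
        exact Finset.sum_pos' (fun j _ => sq_nonneg _)
          ⟨i, Finset.mem_univ i, lt_of_le_of_ne (sq_nonneg _) (Ne.symm (pow_ne_zero 2 hi))⟩
      nlinarith
  have hAunit : IsUnit A.det := (Matrix.isUnit_iff_isUnit_det A).1 hApos.isUnit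
  set c := A⁻¹ *ᵥ ξ with hc
  have hAc : A *ᵥ c = ξ := by
    rw [hc, Matrix.mulVec_mulVec, Matrix.mul_nonsing_inv _ hAunit, Matrix.one_mulVec]
  have hGc : ∀ i, (G *ᵥ c) i = ξ i - lam * c i := by
    intro i
    have : (A *ᵥ c) i = (G *ᵥ c) i + lam * c i := by
      simp [hA, Matrix.add_mulVec, Matrix.smul_mulVec, Matrix.one_mulVec]
    have h := congrFun hAc i
    rw [this] at h; linarith
  set fstar := ∑ i, c i • rep i with hfstar
  have hinner : ∀ f : H, ⟪f, fstar⟫ = ∑ i, c i * φ i f := by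
    intro f
    rw [hfstar, inner_sum]
    exact Finset.sum_congr rfl fun i _ => by rw [real_inner_smul_right, hrep]
  have hφstar : ∀ j, φ j fstar = (G *ᵥ c) j := by
    intro j
    rw [← hrep j fstar, real_inner_comm, hinner]
    simp only [mulVec, dotProduct]
    refine Finset.sum_congr rfl fun i _ => ?_
    rw [← hrep i (rep j), ← hGij]; ring
  have hnormstar : ‖fstar‖ ^ 2 = ∑ i, c i * (G *ᵥ c) i := by
    rw [← real_inner_self_eq_norm_sq, hinner]
    exact Finset.sum_congr rfl fun i _ => by rw [hφstar]
  have hm : ξ ⬝ᵥ c = ∑ i, ξ i * c i := rfl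
  -- key identity
  have key : ∀ f : H, ‖f‖ ^ 2 + (1 / lam) * ∑ i, (φ i f - ξ i) ^ 2 =
      (∑ i, ξ i * c i) + ‖f - fstar‖ ^ 2 +
        (1 / lam) * ∑ i, (φ i f - (G *ᵥ c) i) ^ 2 := by
    intro f
    rw [norm_sub_sq_real, hinner, hnormstar]
    have e1 : ∑ i, (φ i f - (G *ᵥ c) i) ^ 2 =
        ∑ i, (φ i f - (ξ i - lam * c i)) ^ 2 :=
      Finset.sum_congr rfl fun i _ => by rw [hGc]
    have e2 : ∑ i, c i * (G *ᵥ c) i = ∑ i, c i * (ξ i - lam * c i) :=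
      Finset.sum_congr rfl fun i _ => by rw [hGc]
    rw [e1, e2]
    have e3 : ∑ i, ((1 / lam) * (φ i f - ξ i) ^ 2) =
        ∑ i, (ξ i * c i - 2 * (c i * φ i f) + c i * (ξ i - lam * c i) +
          (1 / lam) * (φ i f - (ξ i - lam * c i)) ^ 2) :=
      Finset.sum_congr rfl fun i _ => by field_simp; ring
    simp only [Finset.sum_add_distrib, Finset.sum_sub_distrib, ← Finset.mul_sum] at e3 ⊢
    linarith
  constructor
  · exact ⟨fstar, by dsimp only; rw [key fstar, hm]; simp [hφstar]⟩
  · rintro b ⟨f, rfl⟩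
    dsimp only
    rw [hm, key f]
    have h1 : 0 ≤ ‖f - fstar‖ ^ 2 := by positivity
    have h2 : 0 ≤ (1 / lam) * ∑ i, (φ i f - (G *ᵥ c) i) ^ 2 := by positivity
    linarith
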